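/- For every natural number m, the series B_m(t) := A_m(q² t)·A_m(t)^{−1} ∈ K[[t]] satisfies the functional equation B_m(t) = 1 + q^{m+1} · t · ∏_{i=0}^{m−1} B_m(q^{2i} t). -/

import Mathlib

/-- The variable `q` of `K = ℚ(q)`, playing the role of `𝕃^{1/2}`. -/
noncomputable def q : RatFunc ℚ := RatFunc.X

/-- The `d`-th coefficient `q^{m d² + d} / ∏_{i=1}^{d} (q^{2i} - 1)` of the generating
series of the stack of representations of the `m`-loop quiver. -/
noncomputable def a (m : ℤ) (d : ℕ) : RatFunc ℚ :=
  q ^ (m * (d : ℤ) ^ 2 + (d : ℤ)) * (∏ i ∈ Finset.Icc 1 d, (q ^ (2 * i) - 1))⁻¹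

/-- The generating series `A_m(t) = Σ_d a_d t^d` of the `m`-loop quiver. -/
noncomputable def A (m : ℤ) : PowerSeries (RatFunc ℚ) := PowerSeries.mk (a m)

/-- `B_m(t) := A_m(q² t) / A_m(t)`. -/
noncomputable def B (m : ℕ) : PowerSeries (RatFunc ℚ) :=
  PowerSeries.rescale (q ^ 2) (A m) * (A m)⁻¹

lemma hq0 : q ≠ 0 := RatFunc.X_ne_zero

lemma qpow_ne_one {k : ℕ} (hk : k ≠ 0) : (q : RatFunc ℚ) ^ k ≠ 1 := by
  intro h
  have h2 : (Polynomial.X : Polynomial ℚ) ^ k = 1 := by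
    apply RatFunc.algebraMap_injective ℚ
    rw [map_pow, map_one, RatFunc.algebraMap_X]; exact h
  have := congrArg Polynomial.natDegree h2
  simp [Polynomial.natDegree_X_pow] at this
  exact hk this

lemma qfac_ne_zero {k : ℕ} (hk : k ≠ 0) : (q : RatFunc ℚ) ^ k - 1 ≠ 0 :=
  sub_ne_zero.mpr (qpow_ne_one hk)

lemma P_ne_zero (n : ℕ) : (∏ i ∈ Finset.Icc 1 n, (q ^ (2 * i) - 1)) ≠ 0 := by
  apply Finset.prod_ne_zero_iff.mpr
  intro i hi
  refine qfac_ne_zero ?_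
  have := (Finset.mem_Icc.mp hi).1
  omega

lemma step (m n : ℕ) :
    ((q ^ 2) ^ (n + 1) : RatFunc ℚ) * a m (n + 1)
      = a m (n + 1) + q ^ (m + 1) * ((q ^ (2 * m)) ^ n * a m n) := by
  unfold a
  rw [Finset.prod_Icc_succ_top (by omega : 1 ≤ n + 1)]
  have hP := P_ne_zero n
  have hG : (q : RatFunc ℚ) ^ (2 * (n + 1)) - 1 ≠ 0 := qfac_ne_zero (by omega)
  field_simp
  rw [← zpow_natCast q (2 * (n + 1)), ← zpow_natCast q (m + 1),
    ← zpow_natCast ((q : RatFunc ℚ) ^ (2 * m)) n, ← zpow_natCast q (2 * m), ← zpow_mul,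
    ← zpow_natCast ((q : RatFunc ℚ) ^ 2) (n + 1), ← zpow_natCast q 2, ← zpow_mul]
  have h1 : q ^ (((m+1:ℕ):ℤ)) * q ^ (((2*m:ℕ):ℤ) * (n:ℤ)) * q ^ ((m:ℤ) * (n:ℤ)^2 + (n:ℤ))
      = q ^ ((m:ℤ) * ((n+1:ℕ):ℤ)^2 + ((n+1:ℕ):ℤ)) := by
    rw [← zpow_add₀ hq0, ← zpow_add₀ hq0]; congr 1; push_cast; ring
  have h3 : q ^ (((2:ℕ):ℤ) * ((n+1:ℕ):ℤ)) = q ^ (((2*(n+1):ℕ):ℤ)) := by rw [Nat.cast_mul]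
  rw [h3]
  linear_combination (-(q ^ (((2*(n+1):ℕ):ℤ)) - 1)) * h1

lemma constantCoeff_A (m : ℤ) : PowerSeries.constantCoeff (A m) = 1 := by
  rw [A, PowerSeries.constantCoeff_mk]
  simp [a]

lemma A_ne_zero (m : ℤ) : PowerSeries.constantCoeff (A m) ≠ 0 := by
  rw [constantCoeff_A]; exact one_ne_zero

lemma constantCoeff_rescale' (c : RatFunc ℚ) (f : PowerSeries (RatFunc ℚ)) :
    PowerSeries.constantCoeff (PowerSeries.rescale c f)
      = PowerSeries.constantCoeff f := by
  rw [← PowerSeries.coeff_zero_eq_constantCoeff_apply, PowerSeries.coeff_rescale]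
  simp [PowerSeries.coeff_zero_eq_constantCoeff]

lemma rescale_inv (c : RatFunc ℚ) (f : PowerSeries (RatFunc ℚ))
    (hf : PowerSeries.constantCoeff f ≠ 0) :
    PowerSeries.rescale c (f⁻¹) = (PowerSeries.rescale c f)⁻¹ := by
  rw [PowerSeries.eq_inv_iff_mul_eq_one (by rwa [constantCoeff_rescale'])]
  rw [← map_mul, mul_comm, PowerSeries.mul_inv_cancel f hf, map_one]

/-- The key identity `A_m(q² t) = A_m(t) + q^{m+1} t A_m(q^{2m} t)`. -/
lemma key (m : ℕ) :
    PowerSeries.rescale (q ^ 2) (A m)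
      = A m + PowerSeries.C (R := RatFunc ℚ) (q ^ (m + 1)) * PowerSeries.X *
          PowerSeries.rescale (q ^ (2 * m)) (A m) := by
  ext d
  rw [map_add, PowerSeries.coeff_rescale, mul_assoc, PowerSeries.coeff_C_mul]
  cases d with
  | zero =>
    rw [PowerSeries.coeff_zero_X_mul]
    simp [A]
  | succ n =>
    rw [PowerSeries.coeff_succ_X_mul, PowerSeries.coeff_rescale]
    simpa [A, PowerSeries.coeff_mk] using step m n

lemma prod_B (m k : ℕ) :
    ∏ i ∈ Finset.range k, PowerSeries.rescale (q ^ (2 * i)) (B m)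
      = PowerSeries.rescale (q ^ (2 * k)) (A m) * (A m)⁻¹ := by
  induction k with
  | zero =>
    simp only [Finset.range_zero, Finset.prod_empty, Nat.mul_zero, pow_zero,
      PowerSeries.rescale_one, RingHom.id_apply]
    exact (PowerSeries.mul_inv_cancel _ (A_ne_zero m)).symm
  | succ k ih =>
    rw [Finset.prod_range_succ, ih, B, map_mul, rescale_inv _ _ (A_ne_zero m),
      PowerSeries.rescale_rescale]
    have hcancel : PowerSeries.rescale (q ^ (2 * k)) (A m) *
        (PowerSeries.rescale (q ^ (2 * k)) (A m))⁻¹ = 1 :=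
      PowerSeries.mul_inv_cancel _ (by rw [constantCoeff_rescale']; exact A_ne_zero m)
    have he : (q : RatFunc ℚ) ^ 2 * q ^ (2 * k) = q ^ (2 * (k + 1)) := by
      rw [← pow_add]; ring_nf
    rw [he]
    calc PowerSeries.rescale (q ^ (2 * k)) (A ↑m) * (A ↑m)⁻¹ *
          (PowerSeries.rescale (q ^ (2 * (k + 1))) (A ↑m) *
            (PowerSeries.rescale (q ^ (2 * k)) (A ↑m))⁻¹)
        = PowerSeries.rescale (q ^ (2 * (k + 1))) (A ↑m) * (A ↑m)⁻¹ *
            (PowerSeries.rescale (q ^ (2 * k)) (A ↑m) *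
              (PowerSeries.rescale (q ^ (2 * k)) (A ↑m))⁻¹) := by ring
      _ = PowerSeries.rescale (q ^ (2 * (k + 1))) (A ↑m) * (A ↑m)⁻¹ := by
          rw [hcancel, mul_one]

/-- The functional equation `B_m(t) = 1 + q^{m+1} · t · ∏_{i=0}^{m-1} B_m(q^{2i} t)`. -/
theorem B_functional_equation (m : ℕ) :
    B m = 1 + PowerSeries.C (R := RatFunc ℚ) (q ^ (m + 1)) * PowerSeries.X *
      ∏ i ∈ Finset.range m, PowerSeries.rescale (q ^ (2 * i)) (B m) := by
  rw [prod_B, B, key, add_mul, PowerSeries.mul_inv_cancel _ (A_ne_zero m)]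
  ring
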